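/- arXiv:2006.09947 — 3 statements merged into one kernel-verified Lean document; each statement's English description precedes it below -/
import Mathlib

section
/- For every ε > 0 there exists an integer N(ε) such that for all integers m > n > N(ε), we have |1/p_n - 1/p_m| ≥ (1/6)·|1/n - 1/m|^{1+ε}, where p_k denotes the k-th prime. -/
open Real Filter

lemma pi_lower (n : ℕ) (hn : 4 ≤ n) :
    4 ^ n ≤ (2 * n) ^ (Nat.primeCounting' (2 * n + 1) + 1) := by
  have h1 : 4 ^ n < n * Nat.centralBinom n := Nat.four_pow_lt_mul_centralBinom n hn
  have h2 : Nat.centralBinom n ≤ (2 * n) ^ Nat.primeCounting' (2 * n + 1) := by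
    calc Nat.centralBinom n
        = ∏ p ∈ Finset.range (2 * n + 1), p ^ (Nat.centralBinom n).factorization p :=
          (Nat.prod_pow_factorization_centralBinom n).symm
      _ ≤ ∏ p ∈ Finset.range (2 * n + 1), (if p.Prime then 2 * n else 1) := by
          apply Finset.prod_le_prod
          · intros; positivity
          · intro q _
            by_cases hq : q.Prime
            · simp only [hq, if_true]
              rw [Nat.centralBinom]
              exact Nat.pow_factorization_choose_le (by omega)
            · simp [hq, Nat.factorization_eq_zero_of_not_prime _ hq]
      _ = (2 * n) ^ ((Finset.range (2 * n + 1)).filter Nat.Prime).card := by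
          rw [Finset.prod_ite, Finset.prod_const, Finset.prod_const, one_pow, mul_one]
      _ = (2 * n) ^ Nat.primeCounting' (2 * n + 1) := by
          rw [Nat.primeCounting', Nat.count_eq_card_filter_range]
  calc 4 ^ n ≤ n * Nat.centralBinom n := h1.le
    _ ≤ (2 * n) * (2 * n) ^ Nat.primeCounting' (2 * n + 1) :=
        Nat.mul_le_mul (by omega) h2
    _ = (2 * n) ^ (Nat.primeCounting' (2 * n + 1) + 1) := by ring

lemma nth_prime_le_rpow {δ : ℝ} (hδ : 0 < δ) :
    ∀ᶠ k in atTop, (Nat.nth Nat.Prime k : ℝ) ≤ (k : ℝ) ^ (1 + δ) := by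
  set θ : ℝ := δ / (2 + δ) with hθdef
  have hθ : 0 < θ := by positivity
  have hθ1 : θ < 1 := by
    rw [hθdef, div_lt_one (by linarith)]; linarith
  have hexp : 1 / (1 - θ) = 1 + δ / 2 := by
    rw [hθdef]; field_simp; ring
  -- eventual condition
  have hev : ∀ᶠ k : ℕ in atTop, ((6 / θ) : ℝ) ^ (1 + δ / 2) ≤ (k : ℝ) ^ (δ / 2) := by
    have := (tendsto_rpow_atTop (by linarith : (0:ℝ) < δ / 2)).comp
      tendsto_natCast_atTop_atTop (α := ℕ)
    exact this.eventually_ge_atTop _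
  filter_upwards [hev, eventually_ge_atTop 7] with k hk hk7
  set P := Nat.nth Nat.Prime k with hP
  have hPprime : P.Prime := Nat.prime_nth_prime k
  have hPge : k + 2 ≤ P := Nat.add_two_le_nth_prime k
  have hP9 : 9 ≤ P := by omega
  have hPodd : P % 2 = 1 := by
    rcases hPprime.eq_two_or_odd with h | h
    · omega
    · exact h
  set n := (P - 1) / 2 with hn
  have hP2n : P = 2 * n + 1 := by omega
  have hn4 : 4 ≤ n := by omega
  have hcount : Nat.primeCounting' (2 * n + 1) = k := by
    rw [← hP2n, hP, Nat.primeCounting'_nth_eq]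
  have hnat : 4 ^ n ≤ (2 * n) ^ (k + 1) := by
    have := pi_lower n hn4
    rwa [hcount] at this
  -- move to reals
  have hp0 : (0:ℝ) < (P : ℝ) := by positivity
  have hreal : ((4:ℝ)) ^ (n:ℕ) ≤ ((2 * n : ℕ) : ℝ) ^ (k + 1 : ℕ) := by
    exact_mod_cast hnat
  have hlog : (n : ℝ) * Real.log 4 ≤ (k + 1 : ℝ) * Real.log P := by
    have h1 : Real.log ((4:ℝ) ^ (n:ℕ)) ≤ Real.log (((2 * n : ℕ) : ℝ) ^ (k + 1 : ℕ)) :=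
      Real.log_le_log (by positivity) hreal
    rw [Real.log_pow, Real.log_pow] at h1
    have h2 : Real.log ((2 * n : ℕ) : ℝ) ≤ Real.log P :=
      Real.log_le_log (by positivity) (by exact_mod_cast (by omega : (2 * n : ℕ) ≤ P))
    calc (n : ℝ) * Real.log 4 ≤ (k + 1 : ℝ) * Real.log ((2 * n : ℕ) : ℝ) := by exact_mod_cast h1
      _ ≤ (k + 1 : ℝ) * Real.log P := by
          apply mul_le_mul_of_nonneg_left h2 (by positivity)
  have hlog4 : (1:ℝ) ≤ Real.log 4 := by
    have h2 : (0.6931471803 : ℝ) < Real.log 2 := Real.log_two_gt_d9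
    have : Real.log 4 = 2 * Real.log 2 := by
      rw [show (4:ℝ) = 2 ^ 2 by norm_num, Real.log_pow]; push_cast; ring
    linarith
  have hnp : (P : ℝ) / 3 ≤ (n : ℝ) := by
    have : (P : ℝ) = 2 * n + 1 := by exact_mod_cast hP2n
    have h3 : (3:ℝ) ≤ (P:ℝ) := by exact_mod_cast (by omega : (3:ℕ) ≤ P)
    rw [div_le_iff₀ (by norm_num)]
    linarith
  have hlogP : (0:ℝ) < Real.log P := Real.log_pos (by exact_mod_cast (by omega : 1 < P))
  -- P ≤ 6 k log P
  have hkey : (P : ℝ) ≤ 6 * k * Real.log P := by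
    have h1 : (P : ℝ) / 3 ≤ (k + 1 : ℝ) * Real.log P := by
      calc (P : ℝ) / 3 ≤ (n : ℝ) := hnp
        _ ≤ (n : ℝ) * Real.log 4 := le_mul_of_one_le_right (by positivity) hlog4
        _ ≤ (k + 1 : ℝ) * Real.log P := hlog
    have hk1 : (k + 1 : ℝ) ≤ 2 * k := by
      have : (1:ℝ) ≤ (k:ℝ) := by exact_mod_cast (by omega : 1 ≤ k)
      linarith
    have h2 : (k + 1 : ℝ) * Real.log P ≤ 2 * k * Real.log P :=
      mul_le_mul_of_nonneg_right hk1 hlogP.le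
    linarith
  -- log P ≤ P^θ / θ
  have hlogrpow : Real.log P ≤ (P:ℝ) ^ θ / θ := Real.log_le_rpow_div (by positivity) hθ
  have hk0 : (0:ℝ) < (k:ℝ) := by exact_mod_cast (by omega : 0 < k)
  have hstep : (P:ℝ) ≤ (6 * k / θ) * (P:ℝ) ^ θ := by
    calc (P : ℝ) ≤ 6 * k * Real.log P := hkey
      _ ≤ 6 * k * ((P:ℝ) ^ θ / θ) := by
          apply mul_le_mul_of_nonneg_left hlogrpow (by positivity)
      _ = (6 * k / θ) * (P:ℝ) ^ θ := by ring
  have hpow : (P:ℝ) ^ (1 - θ) ≤ 6 * k / θ := by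
    have hPθ : (0:ℝ) < (P:ℝ) ^ θ := Real.rpow_pos_of_pos hp0 θ
    rw [Real.rpow_sub hp0, Real.rpow_one]
    rw [div_le_iff₀ hPθ]
    exact hstep
  have h1θ : (0:ℝ) < 1 - θ := by linarith
  have hfinal : (P:ℝ) ≤ (6 * k / θ) ^ (1 + δ/2) := by
    have h1 : ((P:ℝ) ^ (1 - θ)) ^ (1/(1-θ)) ≤ (6 * k / θ) ^ (1/(1-θ)) :=
      Real.rpow_le_rpow (Real.rpow_nonneg hp0.le _) hpow (by positivity)
    rw [← Real.rpow_mul hp0.le, mul_one_div_cancel h1θ.ne', Real.rpow_one, hexp] at h1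
    exact h1
  calc (P:ℝ) ≤ (6 * k / θ) ^ (1 + δ/2) := hfinal
    _ = ((6/θ) * k) ^ (1+δ/2) := by ring_nf
    _ = (6/θ)^(1+δ/2) * (k:ℝ)^(1+δ/2) := Real.mul_rpow (by positivity) hk0.le
    _ ≤ (k:ℝ)^(δ/2) * (k:ℝ)^(1+δ/2) :=
        mul_le_mul_of_nonneg_right hk (Real.rpow_nonneg hk0.le _)
    _ = (k:ℝ)^(1+δ) := by rw [← Real.rpow_add hk0]; ring_nf


/-- `p n` is the `n`-th prime, with `p 1 = 2`. -/
noncomputable def p (n : ℕ) : ℕ := Nat.nth Nat.Prime (n - 1)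

set_option maxHeartbeats 1600000 in
theorem stmt_0 :
    ∀ ε : ℝ, 0 < ε → ∃ N : ℕ, ∀ m n : ℕ, N < n → n < m →
      |(1 : ℝ) / p n - 1 / p m| ≥ (1 / 6) * |(1 : ℝ) / n - 1 / m| ^ (1 + ε) := by
  intro ε hε
  set δ : ℝ := min (ε / 3) (1 / 2) with hδdef
  have hδ : 0 < δ := lt_min (by linarith) (by norm_num)
  have hδε3 : 3 * δ ≤ ε := by
    have := min_le_left (ε / 3) (1 / 2); rw [hδdef]; linarith
  have hδhalf : δ ≤ 1 / 2 := min_le_right _ _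
  have hδε : δ ≤ ε := by linarith
  clear_value δ
  obtain ⟨K, hK⟩ := (nth_prime_le_rpow hδ).exists_forall_of_atTop
  refine ⟨K + 6, fun m n hn hm => ?_⟩
  have hn6 : 6 ≤ n := by omega
  have ha4 : (4 : ℝ) ≤ (n:ℝ) := by exact_mod_cast (by omega : (4:ℕ) ≤ n)
  have ha1 : (1 : ℝ) < (n:ℝ) := by linarith
  have ha0 : (0 : ℝ) < (n:ℝ) := by linarith
  have hab : (n:ℝ) < (m:ℝ) := by exact_mod_cast hm
  have hb0 : (0 : ℝ) < (m:ℝ) := by linarith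
  -- prime bounds
  have hPa : ((p n : ℕ) : ℝ) ≤ (n:ℝ) ^ (1 + δ) := by
    have h1 := hK (n - 1) (by omega)
    have h2 : ((n - 1 : ℕ) : ℝ) ^ (1 + δ) ≤ (n:ℝ) ^ (1 + δ) := by
      apply Real.rpow_le_rpow (Nat.cast_nonneg _) _ (by linarith)
      exact_mod_cast Nat.sub_le n 1
    exact le_trans h1 h2
  have hQb : ((p m : ℕ) : ℝ) ≤ (m:ℝ) ^ (1 + δ) := by
    have h1 := hK (m - 1) (by omega)
    have h2 : ((m - 1 : ℕ) : ℝ) ^ (1 + δ) ≤ (m:ℝ) ^ (1 + δ) := by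
      apply Real.rpow_le_rpow (Nat.cast_nonneg _) _ (by linarith)
      exact_mod_cast Nat.sub_le m 1
    exact le_trans h1 h2
  have hnP : n < p n := by
    have := Nat.add_two_le_nth_prime (n - 1); unfold p; omega
  have hmQ : m < p m := by
    have := Nat.add_two_le_nth_prime (m - 1); unfold p; omega
  have haA : (n:ℝ) < ((p n : ℕ) : ℝ) := by exact_mod_cast hnP
  have hbB : (m:ℝ) < ((p m : ℕ) : ℝ) := by exact_mod_cast hmQ
  have hA0 : (0 : ℝ) < ((p n : ℕ) : ℝ) := by linarith
  have hB0 : (0 : ℝ) < ((p m : ℕ) : ℝ) := by linarith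
  have hABn : p n < p m := by
    unfold p
    exact (Nat.nth_lt_nth Nat.infinite_setOf_prime).mpr (by omega)
  have hAB : ((p n : ℕ) : ℝ) < ((p m : ℕ) : ℝ) := by exact_mod_cast hABn
  have hdiff : (m:ℝ) - (n:ℝ) ≤ ((p m : ℕ) : ℝ) - ((p n : ℕ) : ℝ) := by
    have h1 : (m - n) + p n ≤ p m := by
      have := (Nat.nth_strictMono Nat.infinite_setOf_prime).add_le_nat (m - n) (n - 1)
      unfold p
      have he : m - n + (n - 1) = m - 1 := by omega
      rwa [he] at this
    have h2 : ((m - n : ℕ) : ℝ) + ((p n : ℕ) : ℝ) ≤ ((p m : ℕ) : ℝ) := by exact_mod_cast h1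
    have h3 : ((m - n : ℕ) : ℝ) = (m:ℝ) - (n:ℝ) := by
      rw [Nat.cast_sub hm.le]
    linarith
  have hsqle : m ≤ n * n → (m:ℝ) ≤ (n:ℝ) * (n:ℝ) := fun h => by exact_mod_cast h
  have hsqge : n * n < m → (n:ℝ) * (n:ℝ) ≤ (m:ℝ) := fun h => by exact_mod_cast h.le
  -- abbreviations as plain reals
  set a : ℝ := (n : ℝ)
  set b : ℝ := (m : ℝ)
  set A : ℝ := ((p n : ℕ) : ℝ)
  set B : ℝ := ((p m : ℕ) : ℝ)
  clear_value a b A B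
  -- rewrite absolute values
  have hLHSpos : 1 / B < 1 / A := one_div_lt_one_div_of_lt hA0 hAB
  have hxpos : 1 / b < 1 / a := one_div_lt_one_div_of_lt ha0 hab
  rw [abs_of_pos (by linarith : (0:ℝ) < 1 / A - 1 / B),
      abs_of_pos (by linarith : (0:ℝ) < 1 / a - 1 / b)]
  set x : ℝ := 1 / a - 1 / b with hx
  have hx0 : 0 < x := by rw [hx]; linarith
  have hxa : x ≤ 1 / a := by
    have : 0 < 1 / b := by positivity
    rw [hx]; linarith
  have hxeq : x = (b - a) / (a * b) := by
    rw [hx]; field_simp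
  clear_value x
  have hLHSeq : 1 / A - 1 / B = (B - A) / (A * B) := by
    field_simp
  rw [ge_iff_le, hLHSeq]
  clear hK hnP hmQ hABn
  -- generalize the rpow quantities
  obtain ⟨sa, hsa, hsa0⟩ : ∃ s : ℝ, s = a ^ (1 + δ) ∧ 0 < s :=
    ⟨_, rfl, Real.rpow_pos_of_pos ha0 _⟩
  obtain ⟨sb, hsb, hsb0⟩ : ∃ s : ℝ, s = b ^ (1 + δ) ∧ 0 < s :=
    ⟨_, rfl, Real.rpow_pos_of_pos hb0 _⟩
  obtain ⟨t, ht, ht0⟩ : ∃ t : ℝ, t = a ^ ε ∧ 0 < t :=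
    ⟨_, rfl, Real.rpow_pos_of_pos ha0 _⟩
  rw [← hsa] at hPa
  rw [← hsb] at hQb
  by_cases hcase : m ≤ n * n
  · -- Case A : m ≤ n²
    have hba2 : b ≤ a * a := hsqle hcase
    have key : sa * sb ≤ 6 * (a * b * t) := by
      have e1 : sa = a * a ^ δ := by
        rw [hsa, Real.rpow_add ha0, Real.rpow_one]
      have e2 : sb = b * b ^ δ := by
        rw [hsb, Real.rpow_add hb0, Real.rpow_one]
      have h3 : b ^ δ ≤ (a * a) ^ δ := Real.rpow_le_rpow hb0.le hba2 hδ.le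
      have h4 : (a * a) ^ δ = a ^ δ * a ^ δ := Real.mul_rpow ha0.le ha0.le
      have h5 : a ^ δ * (a ^ δ * a ^ δ) = a ^ (3 * δ) := by
        rw [← Real.rpow_add ha0, ← Real.rpow_add ha0]; ring_nf
      have h6 : a ^ (3 * δ) ≤ t := by
        rw [ht]; exact Real.rpow_le_rpow_left_iff ha1 |>.mpr hδε3
      have hδ0 : (0:ℝ) < a ^ δ := Real.rpow_pos_of_pos ha0 _
      have h7 : a ^ δ * b ^ δ ≤ t := by
        calc a ^ δ * b ^ δ ≤ a ^ δ * (a ^ δ * a ^ δ) := by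
              rw [h4] at h3
              exact mul_le_mul_of_nonneg_left h3 hδ0.le
          _ = a ^ (3 * δ) := h5
          _ ≤ t := h6
      have hbδ0 : (0:ℝ) < b ^ δ := Real.rpow_pos_of_pos hb0 _
      calc sa * sb = (a * b) * (a ^ δ * b ^ δ) := by rw [e1, e2]; ring
        _ ≤ (a * b) * t := mul_le_mul_of_nonneg_left h7 (by positivity)
        _ ≤ 6 * (a * b * t) := by nlinarith [mul_pos ha0 hb0]
    calc (1 / 6) * x ^ (1 + ε) = (1 / 6) * (x * x ^ ε) := by
          rw [Real.rpow_add hx0, Real.rpow_one]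
      _ ≤ (1 / 6) * (x * t⁻¹) := by
          have h8 : x ^ ε ≤ t⁻¹ := by
            rw [ht, ← Real.inv_rpow ha0.le, ← one_div]
            exact Real.rpow_le_rpow hx0.le hxa hε.le
          exact mul_le_mul_of_nonneg_left
            (mul_le_mul_of_nonneg_left h8 hx0.le) (by norm_num)
      _ = (b - a) / (6 * (a * b * t)) := by
          rw [hxeq]
          rw [eq_div_iff (by positivity)]
          field_simp
      _ ≤ (b - a) / (sa * sb) :=
          div_le_div_of_nonneg_left (by linarith) (by positivity) key
      _ ≤ (B - A) / (A * B) := by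
          apply div_le_div₀ (by linarith) hdiff (by positivity)
          exact mul_le_mul hPa hQb hB0.le hsa0.le
  · -- Case B : m > n²
    push_neg at hcase
    have hba2 : a * a ≤ b := hsqge hcase
    have hsqrt : (2 : ℝ) ≤ a ^ ((1:ℝ)/2) := by
      have h1 : ((4:ℝ)) ^ ((1:ℝ)/2) ≤ a ^ ((1:ℝ)/2) :=
        Real.rpow_le_rpow (by norm_num) ha4 (by norm_num)
      have h2 : ((4:ℝ)) ^ ((1:ℝ)/2) = 2 := by
        rw [show (4:ℝ) = 2 ^ (2:ℝ) by
              rw [show (2:ℝ) = ((2:ℕ):ℝ) by norm_num, Real.rpow_natCast]; norm_num,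
            ← Real.rpow_mul (by norm_num)]
        norm_num
      linarith
    have h2a : 2 * sa ≤ a * a := by
      have h1δ : a ^ ((1:ℝ)/2) ≤ a ^ (1 - δ) :=
        Real.rpow_le_rpow_left_iff ha1 |>.mpr (by linarith)
      have h3 : 2 ≤ a ^ (1 - δ) := le_trans hsqrt h1δ
      have h4 : a ^ (1 - δ) * sa = a * a := by
        rw [hsa, ← Real.rpow_add ha0,
          show 1 - δ + (1 + δ) = ((2:ℕ):ℝ) by push_cast; ring, Real.rpow_natCast]
        ring
      calc 2 * sa ≤ a ^ (1 - δ) * sa := mul_le_mul_of_nonneg_right h3 hsa0.le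
        _ = a * a := h4
    have hLHSlb : (1/2) * (1 / sa) ≤ (B - A) / (A * B) := by
      rw [← hLHSeq]
      have hAp : 1 / sa ≤ 1 / A := one_div_le_one_div_of_le hA0 hPa
      have hBp : 1 / B ≤ 1 / (a * a) :=
        one_div_le_one_div_of_le (by positivity) (by linarith)
      have h6 : 1 / (a * a) ≤ (1/2) * (1 / sa) := by
        have h7 : 1 / (a * a) ≤ 1 / (2 * sa) :=
          one_div_le_one_div_of_le (by positivity) h2a
        have h8 : 1 / (2 * sa) = (1/2) * (1/sa) := by
          rw [one_div, mul_inv, one_div, one_div]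
        rw [← h8]; exact h7
      linarith
    have hRHSub : (1 / 6) * x ^ (1 + ε) ≤ (1/2) * (1 / sa) := by
      have h1 : x ^ (1 + ε) ≤ (1/a) ^ (1 + ε) :=
        Real.rpow_le_rpow hx0.le hxa (by linarith)
      have h2 : (1/a) ^ (1 + ε) = (a ^ (1 + ε))⁻¹ := by
        rw [one_div, Real.inv_rpow ha0.le]
      have h3 : sa ≤ a ^ (1 + ε) := by
        rw [hsa]; exact Real.rpow_le_rpow_left_iff ha1 |>.mpr (by linarith)
      have hap : (0:ℝ) < a ^ (1 + ε) := Real.rpow_pos_of_pos ha0 _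
      have h4 : (a ^ (1 + ε))⁻¹ ≤ sa⁻¹ := by
        apply inv_anti₀ hsa0 h3
      have h5 : x ^ (1 + ε) ≤ sa⁻¹ := le_trans (h2 ▸ h1) h4
      have h6 : (0:ℝ) ≤ x ^ (1 + ε) := Real.rpow_nonneg hx0.le _
      calc (1/6) * x ^ (1 + ε) ≤ (1/6) * sa⁻¹ :=
            mul_le_mul_of_nonneg_left h5 (by norm_num)
        _ ≤ (1/2) * (1 / sa) := by
            rw [one_div sa]
            have h9 : (0:ℝ) ≤ sa⁻¹ := (inv_pos.mpr hsa0).le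
            nlinarith
    linarith
end

section
/- For every ε > 0 there exists a constant C = C(ε) > 0 such that for all integers m > n ≥ 1, C^{-1}·|1/n - 1/m|^{1+ε} ≤ |1/p_n - 1/p_m| ≤ C·|1/n - 1/m|^{0.475}. -/
open Real Filter

lemma prime_infinite : (setOf Nat.Prime).Infinite := Nat.infinite_setOf_prime

lemma nth_prime_sm : StrictMono (Nat.nth Nat.Prime) := Nat.nth_strictMono prime_infinite

lemma nth_prime_prime (j : ℕ) : (Nat.nth Nat.Prime j).Prime :=
  Nat.nth_mem_of_infinite prime_infinite j

lemma count_nth_prime (j : ℕ) : Nat.count Nat.Prime (Nat.nth Nat.Prime j) = j :=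
  Nat.count_nth_of_infinite prime_infinite j

-- nth j ≥ j + 2
lemma nth_prime_ge (j : ℕ) : j + 2 ≤ Nat.nth Nat.Prime j := by
  induction j with
  | zero => simp [Nat.nth_prime_zero_eq_two]
  | succ k ih =>
    have : Nat.nth Nat.Prime k < Nat.nth Nat.Prime (k + 1) := nth_prime_sm (by omega)
    omega

lemma nth_prime_add_le (a k : ℕ) :
    Nat.nth Nat.Prime a + k ≤ Nat.nth Nat.Prime (a + k) := by
  induction k with
  | zero => simp
  | succ k ih =>
    have : Nat.nth Nat.Prime (a + k) < Nat.nth Nat.Prime (a + (k + 1)) := nth_prime_sm (by omega)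
    omega

-- Chebyshev-type counting bound
lemma cheb (n : ℕ) (hn : 4 ≤ n) :
    4 ^ n < (2 * n) ^ (Nat.count Nat.Prime (2 * n + 1) + 1) := by
  have h1 : 4 ^ n < n * Nat.centralBinom n := Nat.four_pow_lt_mul_centralBinom n hn
  have h2 : Nat.centralBinom n ≤ (2 * n) ^ (Nat.count Nat.Prime (2 * n + 1)) := by
    rw [← Nat.prod_pow_factorization_centralBinom n, Nat.count_eq_card_filter_range]
    calc ∏ p ∈ Finset.range (2 * n + 1), p ^ (Nat.centralBinom n).factorization p
        = ∏ p ∈ (Finset.range (2 * n + 1)).filter Nat.Prime,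
            p ^ (Nat.centralBinom n).factorization p := by
          refine (Finset.prod_filter_of_ne ?_).symm
          intro x _ hx
          by_contra hpx
          exact hx (by rw [Nat.factorization_eq_zero_of_not_prime _ hpx, pow_zero])
      _ ≤ ∏ _p ∈ (Finset.range (2 * n + 1)).filter Nat.Prime, (2 * n) := by
          refine Finset.prod_le_prod' ?_
          intro i _
          exact Nat.pow_factorization_choose_le (by omega)
      _ = (2 * n) ^ ((Finset.range (2 * n + 1)).filter Nat.Prime).card := by
          rw [Finset.prod_const]
  calc 4 ^ n < n * Nat.centralBinom n := h1
    _ ≤ n * (2 * n) ^ (Nat.count Nat.Prime (2 * n + 1)) := Nat.mul_le_mul_left _ h2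
    _ ≤ (2 * n) * (2 * n) ^ (Nat.count Nat.Prime (2 * n + 1)) := Nat.mul_le_mul_right _ (by omega)
    _ = (2 * n) ^ (Nat.count Nat.Prime (2 * n + 1) + 1) := by ring

-- key inequality
lemma key (j : ℕ) (hj : 3 ≤ j) :
    2 ^ (Nat.nth Nat.Prime j + 1) < (Nat.nth Nat.Prime j + 1) ^ (j + 2) := by
  set q := Nat.nth Nat.Prime j with hq
  have hqp : q.Prime := nth_prime_prime j
  have hq7 : 7 ≤ q := by
    have h3 : Nat.nth Nat.Prime 3 ≤ q := nth_prime_sm.monotone hj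
    have : Nat.nth Nat.Prime 3 = 7 := by
      have hc7 : Nat.count Nat.Prime 7 = 3 := by decide
      have := Nat.nth_count (p := Nat.Prime) (n := 7) (by norm_num)
      rwa [hc7] at this
    omega
  have hodd : Odd q := hqp.odd_of_ne_two (by omega)
  obtain ⟨r, hr⟩ := hodd
  -- q = 2r+1, set n = r+1, 2n = q+1
  have hn4 : 4 ≤ r + 1 := by omega
  have h2n : 2 * (r + 1) = q + 1 := by omega
  have hc := cheb (r + 1) hn4
  rw [h2n] at hc
  have hcount : Nat.count Nat.Prime (q + 1 + 1) = j + 1 := by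
    have e1 : Nat.count Nat.Prime (q + 1) = j + 1 := by
      rw [Nat.count_succ, count_nth_prime, if_pos hqp]
    have hnp : ¬ (q + 1).Prime := by
      intro hp
      have : Even (q + 1) := ⟨r + 1, by omega⟩
      rw [Nat.Prime.even_iff hp] at this
      omega
    rw [Nat.count_succ, e1, if_neg hnp]
  rw [hcount] at hc
  calc 2 ^ (q + 1) = 4 ^ (r + 1) := by
        rw [show (4:ℕ) = 2^2 by norm_num, ← pow_mul, h2n]
    _ < (q + 1) ^ (j + 1 + 1) := hc
    _ = (q + 1) ^ (j + 2) := by ring_nf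

lemma nth_two : Nat.nth Nat.Prime 2 = 5 := by
  have hc : Nat.count Nat.Prime 5 = 2 := by decide
  have := Nat.nth_count (p := Nat.Prime) (n := 5) (by norm_num)
  rwa [hc] at this

lemma growth (δ : ℝ) (hδ : 0 < δ) (hδ1 : δ ≤ 1) :
    ∃ A : ℝ, 1 ≤ A ∧ ∀ k : ℕ, 1 ≤ k → (p k : ℝ) ≤ A * (k : ℝ) ^ (1 + δ) := by
  set s : ℝ := δ / (1 + δ) with hs
  have h1δ : (0:ℝ) < 1 + δ := by linarith
  have hs0 : 0 < s := div_pos hδ h1δ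
  have hs1 : s < 1 := by
    rw [hs, div_lt_one h1δ]; linarith
  have hexp : (1 - s) * (1 + δ) = 1 := by
    rw [hs]; field_simp; ring
  have hlog2 : (0:ℝ) < Real.log 2 := Real.log_pos (by norm_num)
  set B : ℝ := ((s * Real.log 2)⁻¹) ^ (1 + δ) with hB
  have hslog : 0 < s * Real.log 2 := mul_pos hs0 hlog2
  have hB0 : 0 < B := Real.rpow_pos_of_pos (inv_pos.mpr hslog) _
  refine ⟨max (4 * B) 5, le_trans (by norm_num) (le_max_right _ _), ?_⟩
  intro k hk
  have hk1 : (1:ℝ) ≤ (k:ℝ) := by exact_mod_cast hk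
  have hkpow1 : (1:ℝ) ≤ (k:ℝ) ^ (1 + δ) := Real.one_le_rpow hk1 (by linarith)
  rcases le_or_gt k 3 with hk3 | hk4
  · -- small k : p k ≤ 5
    have hpk : p k ≤ 5 := by
      have : p k ≤ Nat.nth Nat.Prime 2 := nth_prime_sm.monotone (by omega)
      rwa [nth_two] at this
    calc (p k : ℝ) ≤ 5 := by exact_mod_cast hpk
      _ ≤ max (4 * B) 5 := le_max_right _ _
      _ ≤ max (4 * B) 5 * (k:ℝ) ^ (1 + δ) := le_mul_of_one_le_right (by positivity) hkpow1
  · -- large k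
    set j := k - 1 with hj
    have hj3 : 3 ≤ j := by omega
    set q := Nat.nth Nat.Prime j with hq
    have hkey := key j hj3
    set y : ℝ := (q : ℝ) + 1 with hy
    have hy2 : (2:ℝ) ≤ y := by
      have : 2 ≤ q := Nat.Prime.two_le (Nat.nth_mem_of_infinite Nat.infinite_setOf_prime j)
      have : (2:ℝ) ≤ (q:ℝ) := by exact_mod_cast this
      linarith
    have hy0 : (0:ℝ) < y := by linarith
    -- take logs of key
    have hkeyR : (2:ℝ) ^ (q + 1 : ℕ) ≤ y ^ (j + 2 : ℕ) := by
      have := hkey.le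
      have h2 : ((2 ^ (q + 1) : ℕ) : ℝ) ≤ (((q + 1) ^ (j + 2) : ℕ) : ℝ) := by exact_mod_cast this
      push_cast at h2
      convert h2 using 2
    have hlogkey : y * Real.log 2 ≤ ((j:ℝ) + 2) * Real.log y := by
      have hl := Real.log_le_log (by positivity) hkeyR
      rw [Real.log_pow, Real.log_pow] at hl
      push_cast at hl
      calc y * Real.log 2 ≤ ((q:ℝ) + 1) * Real.log 2 := by rw [hy]
        _ ≤ ((j:ℝ) + 2) * Real.log y := hl
    -- log y ≤ y^s / s
    have hlogy : Real.log y ≤ y ^ s / s := by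
      have h1 : Real.log (y ^ s) ≤ y ^ s := by
        have := Real.log_le_sub_one_of_pos (Real.rpow_pos_of_pos hy0 s)
        linarith
      rw [Real.log_rpow hy0] at h1
      rw [le_div_iff₀ hs0]
      linarith [mul_comm s (Real.log y)]
    -- y^(1-s) ≤ (j+2)/(s log 2)
    have hys : y ^ (1 - s) ≤ ((j:ℝ) + 2) * (s * Real.log 2)⁻¹ := by
      have hys0 : (0:ℝ) < y ^ s := Real.rpow_pos_of_pos hy0 s
      have h2 : y * Real.log 2 ≤ ((j:ℝ) + 2) * (y ^ s / s) :=
        hlogkey.trans (by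
          have hj2 : (0:ℝ) ≤ (j:ℝ) + 2 := by positivity
          exact mul_le_mul_of_nonneg_left hlogy hj2)
      have hsplit : y = y ^ (1 - s) * y ^ s := by
        rw [← Real.rpow_add hy0]; norm_num
      have h4 : (y ^ (1 - s) * (s * Real.log 2)) * y ^ s ≤ ((j:ℝ) + 2) * y ^ s := by
        calc (y ^ (1 - s) * (s * Real.log 2)) * y ^ s
            = s * (y ^ (1 - s) * y ^ s * Real.log 2) := by ring
          _ = s * (y * Real.log 2) := by rw [← hsplit]
          _ ≤ s * (((j:ℝ) + 2) * (y ^ s / s)) := mul_le_mul_of_nonneg_left h2 hs0.le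
          _ = ((j:ℝ) + 2) * y ^ s := by field_simp
      have h3 := le_of_mul_le_mul_right h4 hys0
      have h3' : y ^ (1 - s) ≤ ((j:ℝ) + 2) / (s * Real.log 2) := (le_div_iff₀ hslog).mpr h3
      rw [div_eq_mul_inv] at h3'
      exact h3'
    -- conclude y ≤ B * (j+2)^(1+δ)
    have hyB : y ≤ ((j:ℝ) + 2) ^ (1 + δ) * B := by
      have hbase : (0:ℝ) ≤ y ^ (1 - s) := (Real.rpow_pos_of_pos hy0 _).le
      have h6 : (y ^ (1 - s)) ^ (1 + δ) ≤ (((j:ℝ) + 2) * (s * Real.log 2)⁻¹) ^ (1 + δ) :=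
        Real.rpow_le_rpow hbase hys (by linarith)
      rw [← Real.rpow_mul hy0.le, hexp, Real.rpow_one] at h6
      rw [Real.mul_rpow (by positivity) (by positivity)] at h6
      exact h6
    -- j + 2 = k + 1
    have hjk : ((j:ℝ) + 2) = (k:ℝ) + 1 := by
      have : j + 2 = k + 1 := by omega
      exact_mod_cast congrArg (Nat.cast : ℕ → ℝ) this
    have hk1' : ((k:ℝ) + 1) ^ (1 + δ) ≤ 4 * (k:ℝ) ^ (1 + δ) := by
      have h7 : ((k:ℝ) + 1) ^ (1 + δ) ≤ (2 * (k:ℝ)) ^ (1 + δ) :=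
        Real.rpow_le_rpow (by positivity) (by linarith) (by linarith)
      rw [Real.mul_rpow (by norm_num) (by positivity)] at h7
      have h8 : (2:ℝ) ^ (1 + δ) ≤ 4 := by
        have := Real.rpow_le_rpow_of_exponent_le (x := 2) (by norm_num) (show 1 + δ ≤ 2 by linarith)
        calc (2:ℝ) ^ (1 + δ) ≤ (2:ℝ) ^ (2:ℝ) := this
          _ = 4 := by
            rw [show (2:ℝ) = ((2:ℕ):ℝ) by norm_num, Real.rpow_natCast]; norm_num
      calc ((k:ℝ) + 1) ^ (1 + δ) ≤ (2:ℝ) ^ (1 + δ) * (k:ℝ) ^ (1 + δ) := h7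
        _ ≤ 4 * (k:ℝ) ^ (1 + δ) := by
            have : (0:ℝ) ≤ (k:ℝ) ^ (1 + δ) := by positivity
            nlinarith
    have hpq : (p k : ℝ) = (q : ℝ) := by rw [p, hq, hj]
    calc (p k : ℝ) = (q : ℝ) := hpq
      _ ≤ y := by rw [hy]; linarith
      _ ≤ ((j:ℝ) + 2) ^ (1 + δ) * B := hyB
      _ = ((k:ℝ) + 1) ^ (1 + δ) * B := by rw [hjk]
      _ ≤ 4 * (k:ℝ) ^ (1 + δ) * B := by nlinarith [hB0]
      _ = (4 * B) * (k:ℝ) ^ (1 + δ) := by ring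
      _ ≤ max (4 * B) 5 * (k:ℝ) ^ (1 + δ) := by
          have : (0:ℝ) ≤ (k:ℝ) ^ (1 + δ) := by positivity
          nlinarith [le_max_left (4*B) (5:ℝ)]

theorem stmt_7 :
    ∀ ε : ℝ, 0 < ε → ∃ C : ℝ, 0 < C ∧ ∀ m n : ℕ, 1 ≤ n → n < m →
      C⁻¹ * |(1 : ℝ) / n - 1 / m| ^ (1 + ε) ≤ |(1 : ℝ) / p n - 1 / p m| ∧
      |(1 : ℝ) / p n - 1 / p m| ≤ C * |(1 : ℝ) / n - 1 / m| ^ (0.475 : ℝ) := by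
  intro ε hε
  obtain ⟨δ, hδdef⟩ : ∃ x : ℝ, x = min ε 1 / 2 := ⟨_, rfl⟩
  have hδ0 : 0 < δ := by
    rw [hδdef]
    have : 0 < min ε 1 := lt_min hε one_pos
    positivity
  have hδ1 : δ ≤ 1 := by
    have : min ε 1 ≤ 1 := min_le_right _ _
    rw [hδdef]; linarith
  have h2δε : 2 * δ ≤ ε := by
    have : min ε 1 ≤ ε := min_le_left _ _
    rw [hδdef]; linarith
  obtain ⟨A, hA1, hA⟩ := growth δ hδ0 hδ1
  have hA0 : (0:ℝ) < A := by linarith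
  obtain ⟨C, hC⟩ : ∃ x : ℝ, x = 2 * A ^ 2 := ⟨_, rfl⟩
  have hC1 : (1:ℝ) ≤ C := by rw [hC]; nlinarith
  have hC0 : (0:ℝ) < C := by linarith
  refine ⟨C, hC0, ?_⟩
  intro m n hn hnm
  obtain ⟨N, hN⟩ : ∃ x : ℝ, x = (n:ℝ) := ⟨_, rfl⟩
  obtain ⟨M, hM⟩ : ∃ x : ℝ, x = (m:ℝ) := ⟨_, rfl⟩
  obtain ⟨P, hP⟩ : ∃ x : ℝ, x = ((p n : ℕ) : ℝ) := ⟨_, rfl⟩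
  obtain ⟨Q, hQ⟩ : ∃ x : ℝ, x = ((p m : ℕ) : ℝ) := ⟨_, rfl⟩
  have hN1 : (1:ℝ) ≤ N := by rw [hN]; exact_mod_cast hn
  have hNM : N + 1 ≤ M := by rw [hN, hM]; exact_mod_cast hnm
  have hN0 : (0:ℝ) < N := by linarith
  have hM0 : (0:ℝ) < M := by linarith
  have hPn : N + 1 ≤ P := by
    rw [hN, hP]
    have h := nth_prime_ge (n - 1)
    have : n + 1 ≤ p n := by unfold p; omega
    exact_mod_cast this
  have hQm : M + 1 ≤ Q := by
    rw [hM, hQ]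
    have h := nth_prime_ge (m - 1)
    have : m + 1 ≤ p m := by unfold p; omega
    exact_mod_cast this
  have hP0 : (0:ℝ) < P := by linarith
  have hQ0 : (0:ℝ) < Q := by linarith
  have hQP : P + (M - N) ≤ Q := by
    have h := nth_prime_add_le (n - 1) (m - n)
    have h2 : n - 1 + (m - n) = m - 1 := by omega
    rw [h2] at h
    have h3 : p n + (m - n) ≤ p m := h
    have h4 : ((p n : ℕ) : ℝ) + (((m - n : ℕ)) : ℝ) ≤ ((p m : ℕ) : ℝ) := by exact_mod_cast h3
    rw [Nat.cast_sub (le_of_lt hnm)] at h4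
    rw [hP, hQ, hN, hM]
    linarith
  have hPQ : P < Q := by linarith
  -- powers of N
  obtain ⟨w, hw⟩ : ∃ x : ℝ, x = N ^ δ := ⟨_, rfl⟩
  obtain ⟨u, hu⟩ : ∃ x : ℝ, x = N ^ (2 * δ) := ⟨_, rfl⟩
  have hw1 : (1:ℝ) ≤ w := by rw [hw]; exact Real.one_le_rpow hN1 hδ0.le
  have hu1 : (1:ℝ) ≤ u := by rw [hu]; exact Real.one_le_rpow hN1 (by linarith)
  have hw0 : (0:ℝ) < w := by linarith
  have hu0 : (0:ℝ) < u := by linarith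
  have hwu : w ≤ u := by
    rw [hw, hu]; exact Real.rpow_le_rpow_of_exponent_le hN1 (by linarith)
  have hww : w * w = u := by
    rw [hw, hu, ← Real.rpow_add hN0]; ring_nf
  have hPA : P ≤ A * N * w := by
    have h := hA n hn
    rw [← hP, ← hN] at h
    calc P ≤ A * N ^ (1 + δ) := h
      _ = A * N * w := by rw [Real.rpow_add hN0, Real.rpow_one, hw]; ring
  -- rewrite the goal in terms of t and s
  rw [← hN, ← hM, ← hP, ← hQ]
  have htpos : (0:ℝ) < 1 / N - 1 / M := by
    have : 1 / M < 1 / N := one_div_lt_one_div_of_lt hN0 (by linarith)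
    linarith
  have hspos : (0:ℝ) < 1 / P - 1 / Q := by
    have : 1 / Q < 1 / P := one_div_lt_one_div_of_lt hP0 hPQ
    linarith
  rw [abs_of_pos htpos, abs_of_pos hspos]
  obtain ⟨t, ht⟩ : ∃ x : ℝ, x = 1 / N - 1 / M := ⟨_, rfl⟩
  obtain ⟨s, hs⟩ : ∃ x : ℝ, x = 1 / P - 1 / Q := ⟨_, rfl⟩
  rw [← ht, ← hs]
  rw [← ht] at htpos
  rw [← hs] at hspos
  have htN : t ≤ N⁻¹ := by
    rw [ht, one_div]
    have : 0 < 1 / M := by positivity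
    linarith
  have ht1 : t ≤ 1 := le_trans htN (by rw [inv_le_one_iff₀]; right; exact hN1)
  have hNne : N ≠ 0 := ne_of_gt hN0
  have hMne : M ≠ 0 := ne_of_gt hM0
  have hPne : P ≠ 0 := ne_of_gt hP0
  have hQne : Q ≠ 0 := ne_of_gt hQ0
  have hune : u ≠ 0 := ne_of_gt hu0
  have hteq : t = (M - N) / (N * M) := by rw [ht]; field_simp
  have hseq : s = (Q - P) / (P * Q) := by rw [hs]; field_simp
  constructor
  · -- lower bound
    rw [inv_mul_le_iff₀ hC0]
    have hstep1 : t ^ (1 + ε) ≤ t ^ (1 + 2 * δ) :=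
      Real.rpow_le_rpow_of_exponent_ge htpos ht1 (by linarith)
    have hstep2 : t ^ (1 + 2 * δ) ≤ t * u⁻¹ := by
      have e1 : t ^ (1 + 2 * δ) = t * t ^ (2 * δ) := by
        rw [Real.rpow_add htpos, Real.rpow_one]
      have e2 : t ^ (2 * δ) ≤ u⁻¹ := by
        have h1 : t ^ (2 * δ) ≤ (N⁻¹) ^ (2 * δ) :=
          Real.rpow_le_rpow htpos.le htN (by linarith)
        rwa [Real.inv_rpow hN0.le, ← hu] at h1
      rw [e1]
      exact mul_le_mul_of_nonneg_left e2 htpos.le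
    have hmain : t * u⁻¹ ≤ C * s := by
      rcases le_or_gt (2 * P) Q with hcase | hcase
      · -- Q ≥ 2P : s ≥ 1/(2P)
        have hs2 : (2 * P)⁻¹ ≤ s := by
          rw [hs]
          have h1 : 1 / Q ≤ 1 / (2 * P) :=
            one_div_le_one_div_of_le (by linarith) hcase
          have h2 : (1:ℝ) / P - 1 / (2 * P) = (2 * P)⁻¹ := by
            field_simp; ring
          linarith
        have hlhs : t * u⁻¹ ≤ (N * u)⁻¹ := by
          rw [mul_inv]
          exact mul_le_mul_of_nonneg_right htN (by positivity)
        have hkey : (N * u)⁻¹ ≤ C * (2 * P)⁻¹ := by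
          have hP2 : P ≤ A ^ 2 * (N * u) := by
            calc P ≤ A * N * w := hPA
              _ ≤ A * N * u := mul_le_mul_of_nonneg_left hwu (by positivity)
              _ = A * (N * u) := by ring
              _ ≤ A * (A * (N * u)) :=
                  mul_le_mul_of_nonneg_left (le_mul_of_one_le_left (by positivity) hA1) hA0.le
              _ = A ^ 2 * (N * u) := by ring
          rw [inv_eq_one_div, inv_eq_one_div, mul_one_div,
            div_le_div_iff₀ (by positivity) (by positivity), hC]
          linarith [hP2]
        calc t * u⁻¹ ≤ (N * u)⁻¹ := hlhs
          _ ≤ C * (2 * P)⁻¹ := hkey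
          _ ≤ C * s := mul_le_mul_of_nonneg_left hs2 hC0.le
      · -- Q < 2P : s ≥ (M-N)/(C * N² u)
        have hden : P * Q ≤ C * (N * N * u) := by
          rw [hC]
          have h1 : P * Q ≤ P * (2 * P) := mul_le_mul_of_nonneg_left hcase.le hP0.le
          have h2 : P * P ≤ (A * N * w) * (A * N * w) :=
            mul_le_mul hPA hPA hP0.le (by positivity)
          have h3 : (A * N * w) * (A * N * w) = A ^ 2 * (N * N * u) := by
            rw [← hww]; ring
          linarith [h1, h2, h3]
        have hsge : (M - N) / (C * (N * N * u)) ≤ s := by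
          rw [hseq]
          exact div_le_div₀ (by linarith) (by linarith) (by positivity) hden
        have hlhs : t * u⁻¹ ≤ (M - N) / (N * N * u) := by
          have e : t * u⁻¹ = (M - N) / (N * M * u) := by
            rw [hteq]
            field_simp
          rw [e]
          refine div_le_div₀ (by linarith) le_rfl (by positivity) ?_
          have : N * N ≤ N * M := mul_le_mul_of_nonneg_left (by linarith) hN0.le
          exact mul_le_mul_of_nonneg_right this hu0.le
        have heqC : C * ((M - N) / (C * (N * N * u))) = (M - N) / (N * N * u) := by
          field_simp
        calc t * u⁻¹ ≤ (M - N) / (N * N * u) := hlhs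
          _ = C * ((M - N) / (C * (N * N * u))) := heqC.symm
          _ ≤ C * s := mul_le_mul_of_nonneg_left hsge hC0.le
    calc t ^ (1 + ε) ≤ t ^ (1 + 2 * δ) := hstep1
      _ ≤ t * u⁻¹ := hstep2
      _ ≤ C * s := hmain
  · -- upper bound
    obtain ⟨z, hz⟩ : ∃ x : ℝ, x = (N + 1)⁻¹ := ⟨_, rfl⟩
    have hz0 : (0:ℝ) < z := by rw [hz]; positivity
    have hz1 : z ≤ 1 := by
      rw [hz, inv_le_one_iff₀]; right; linarith
    have hsz : s ≤ z := by
      have h1 : s ≤ 1 / P := by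
        have : 0 < 1 / Q := by positivity
        rw [hs]; linarith
      have h2 : (1:ℝ) / P ≤ z := by
        rw [hz, one_div]
        exact inv_anti₀ (by linarith) hPn
      linarith
    have htz : z * z ≤ t := by
      have h1 : 1 / M ≤ 1 / (N + 1) := one_div_le_one_div_of_le (by linarith) hNM
      have h2 : (1:ℝ) / N - 1 / (N + 1) = 1 / (N * (N + 1)) := by
        field_simp
        ring
      have h3 : z * z ≤ (1:ℝ) / (N * (N + 1)) := by
        rw [hz, ← mul_inv, one_div]
        apply inv_anti₀ (by positivity)
        have hNN : N ≤ N + 1 := by linarith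
        exact mul_le_mul_of_nonneg_right hNN (by linarith)
      rw [ht]; linarith
    have h095 : z ≤ (z * z) ^ (0.475:ℝ) := by
      have e1 : (z * z) ^ (0.475:ℝ) = z ^ (0.95:ℝ) := by
        rw [show z * z = z ^ (2:ℝ) by rw [Real.rpow_two]; ring,
          ← Real.rpow_mul hz0.le]
        norm_num
      rw [e1]
      calc z = z ^ (1:ℝ) := (Real.rpow_one z).symm
        _ ≤ z ^ (0.95:ℝ) := Real.rpow_le_rpow_of_exponent_ge hz0 hz1 (by norm_num)
    have hfin : (z * z) ^ (0.475:ℝ) ≤ t ^ (0.475:ℝ) :=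
      Real.rpow_le_rpow (by positivity) htz (by norm_num)
    have htrn : (0:ℝ) ≤ t ^ (0.475:ℝ) := Real.rpow_nonneg htpos.le _
    calc s ≤ z := hsz
      _ ≤ (z * z) ^ (0.475:ℝ) := h095
      _ ≤ t ^ (0.475:ℝ) := hfin
      _ ≤ C * t ^ (0.475:ℝ) := le_mul_of_one_le_left htrn hC1
end

section
/- Cramér's conjecture (there exists C > 0 such that p_{n+1} - p_n ≤ C(log p_n)² for all n ≥ 1) holds if and only if the map sending 1/n to 1/p_n is Lipschitz, i.e., there exists a constant L such that |1/p_n - 1/p_m| ≤ L·|1/n - 1/m| for all m, n ≥ 1. -/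
open Real Filter

lemma p_prime (n : ℕ) : (p n).Prime := Nat.prime_nth_prime _
lemma p_two_le (n : ℕ) : 2 ≤ p n := (p_prime n).two_le
lemma p_posR (n : ℕ) : (0:ℝ) < p n := by exact_mod_cast (p_prime n).pos
lemma log_p_pos (n : ℕ) : 0 < Real.log (p n) :=
  Real.log_pos (by exact_mod_cast (p_prime n).one_lt)

lemma p_lt_p_succ {n : ℕ} (hn : 1 ≤ n) : p n < p (n+1) := by
  unfold p
  have h : n + 1 - 1 = (n-1) + 1 := by omega
  rw [h]
  exact (Nat.nth_lt_nth Nat.infinite_setOf_prime).2 (by omega)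

lemma count_p {n : ℕ} (hn : 1 ≤ n) : Nat.count Nat.Prime (p n + 1) = n := by
  rw [Nat.count_succ, if_pos (p_prime n)]
  unfold p
  rw [Nat.count_nth_of_infinite Nat.infinite_setOf_prime]
  omega

-- Chebyshev: theta bound
lemma theta_le (N : ℕ) :
    ∑ q ∈ (Finset.range (N+1)).filter Nat.Prime, Real.log q ≤ N * Real.log 4 := by
  have h1 : Real.log (primorial N) = ∑ q ∈ (Finset.range (N+1)).filter Nat.Prime, Real.log q := by
    rw [primorial, Nat.cast_prod, Real.log_prod]
    intro q hq
    have := (Finset.mem_filter.1 hq).2.pos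
    positivity
  have h2 : Real.log (primorial N) ≤ Real.log (4^N : ℕ) := by
    apply Real.log_le_log (by exact_mod_cast primorial_pos N)
    exact_mod_cast primorial_le_4_pow N
  rw [h1] at h2
  calc _ ≤ _ := h2
    _ = N * Real.log 4 := by push_cast; rw [Real.log_pow]

-- standalone π-upper: for N ≥ 2, (count) * log N ≤ 7 N
lemma pi_upper (N : ℕ) (hN : 2 ≤ N) :
    (Nat.count Nat.Prime (N+1) : ℝ) * Real.log N ≤ 7 * N := by
  classical
  set S : Finset ℕ := (Finset.range (N+1)).filter Nat.Prime with hS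
  have hcard : Nat.count Nat.Prime (N+1) = S.card := by
    rw [Nat.count_eq_card_filter_range]
  set T : Finset ℕ := S.filter (fun q => N < q * q) with hT
  have hNR : (1:ℝ) ≤ (N:ℝ) := by exact_mod_cast hN.trans' one_le_two
  have hlogN : 0 < Real.log N := Real.log_pos (by exact_mod_cast hN)
  -- card of S \ T
  have hsub : S \ T ⊆ Finset.range (Nat.sqrt N + 1) := by
    intro q hq
    simp only [Finset.mem_sdiff, hT, Finset.mem_filter, not_and, not_lt] at hq
    have h2 : q * q ≤ N := hq.2 hq.1
    have := Nat.le_sqrt.2 h2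
    simp [Finset.mem_range]; omega
  have hcard2 : (S.card : ℝ) ≤ T.card + (Nat.sqrt N + 1) := by
    have : S.card ≤ T.card + (S \ T).card := by
      rw [add_comm, Finset.card_sdiff_add_card_eq_card (Finset.filter_subset _ _)]
    have h3 : (S \ T).card ≤ Nat.sqrt N + 1 := by
      simpa using Finset.card_le_card hsub
    push_cast
    have := this.trans (by omega : T.card + (S \ T).card ≤ T.card + (Nat.sqrt N + 1))
    exact_mod_cast this
  -- each q in T has log q ≥ log N / 2
  have hTlog : (T.card : ℝ) * (Real.log N / 2) ≤ ∑ q ∈ T, Real.log q := by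
    rw [← nsmul_eq_mul]
    apply Finset.card_nsmul_le_sum
    intro q hq
    simp only [hT, hS, Finset.mem_filter, Finset.mem_range] at hq
    have hqq : N ≤ q * q := le_of_lt hq.2
    have hq2 : (N:ℝ) ≤ (q:ℝ)^2 := by
      have h' : ((N:ℝ)) ≤ (q:ℝ) * q := by exact_mod_cast hqq
      nlinarith [h']
    have hqpos : (0:ℝ) < q := by exact_mod_cast hq.1.2.pos
    have := Real.log_le_log (by positivity) hq2
    rw [Real.log_pow] at this
    push_cast at this
    linarith
  -- theta bound
  have htheta : ∑ q ∈ T, Real.log q ≤ N * Real.log 4 := by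
    refine le_trans ?_ (theta_le N)
    apply Finset.sum_le_sum_of_subset_of_nonneg
    · exact (Finset.filter_subset _ _).trans (le_of_eq hS.symm)
    · intro q hq _
      have : Nat.Prime q := (Finset.mem_filter.1 hq).2
      apply Real.log_nonneg
      exact_mod_cast this.one_le
  -- sqrt bounds
  have hsqrt : (Nat.sqrt N : ℝ) ≤ Real.sqrt N := by
    rw [show ((Nat.sqrt N : ℝ)) = Real.sqrt ((Nat.sqrt N)^2) by
      rw [Real.sqrt_sq (by positivity)]]
    apply Real.sqrt_le_sqrt
    exact_mod_cast Nat.sqrt_le' N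
  have hsq1 : (1:ℝ) ≤ Real.sqrt N := by
    rw [show (1:ℝ) = Real.sqrt 1 by simp]
    exact Real.sqrt_le_sqrt hNR
  have hlogsqrt : Real.log N ≤ 2 * Real.sqrt N := by
    have h4 : Real.log N = 2 * Real.log (Real.sqrt N) := by
      rw [Real.log_sqrt (by positivity : (0:ℝ) ≤ (N:ℝ))]
      ring
    rw [h4]
    have := Real.log_le_sub_one_of_pos (by linarith : (0:ℝ) < Real.sqrt N)
    linarith
  have hss : Real.sqrt N * Real.sqrt N = N := Real.mul_self_sqrt (by positivity)
  have hlog4 : Real.log 4 ≤ (3:ℝ)/2 := by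
    rw [show (4:ℝ) = 2^2 by norm_num, Real.log_pow]
    have := Real.log_two_lt_d9
    push_cast
    linarith
  -- combine
  have key : (S.card : ℝ) * Real.log N ≤ 2 * (N * Real.log 4) + (Real.sqrt N + 1) * Real.log N := by
    have h5 : (T.card : ℝ) * Real.log N ≤ 2 * (N * Real.log 4) := by
      nlinarith [hTlog, htheta]
    nlinarith [hcard2, hsqrt, hlogN.le]
  rw [hcard]
  have h6 : (Real.sqrt N + 1) * Real.log N ≤ 4 * N := by
    nlinarith [hlogsqrt, hss, hsq1, hlogN.le]
  nlinarith [key, h6, hNR]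

lemma cheb_upper {n : ℕ} (hn : 1 ≤ n) : (n : ℝ) * Real.log (p n) ≤ 7 * p n := by
  have h := pi_upper (p n) (p_two_le n)
  rwa [count_p hn] at h

lemma binom_le (m : ℕ) (hm : 1 ≤ m) :
    Nat.centralBinom m ≤ (2*m) ^ (Nat.count Nat.Prime (2*m+1)) := by
  classical
  set c := Nat.centralBinom m with hc
  have hc0 : c ≠ 0 := (Nat.centralBinom_pos m).ne'
  have hsub : c.factorization.support ⊆ (Finset.range (2*m+1)).filter Nat.Prime := by
    intro q hq
    rw [Nat.support_factorization] at hq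
    have hqp : q.Prime := Nat.prime_of_mem_primeFactors hq
    have h1 : q ^ (c.factorization q) ≤ 2*m := by
      rw [hc, Nat.centralBinom]
      exact Nat.pow_factorization_choose_le (by omega)
    have h2 : 1 ≤ c.factorization q := by
      rw [← Nat.Prime.pow_dvd_iff_le_factorization hqp hc0, pow_one]
      exact Nat.dvd_of_mem_primeFactors hq
    have h3 : q ≤ 2*m := le_trans (le_trans (le_of_eq (pow_one q).symm)
      (Nat.pow_le_pow_right hqp.pos h2)) h1
    simp only [Finset.mem_filter, Finset.mem_range]
    exact ⟨by omega, hqp⟩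
  calc c = c.factorization.prod (· ^ ·) := (Nat.factorization_prod_pow_eq_self hc0).symm
    _ ≤ ∏ q ∈ c.factorization.support, 2*m := by
        rw [Finsupp.prod]
        apply Finset.prod_le_prod'
        intro q hq
        rw [hc, Nat.centralBinom]
        exact Nat.pow_factorization_choose_le (by omega)
    _ = (2*m) ^ c.factorization.support.card := by rw [Finset.prod_const]
    _ ≤ (2*m) ^ (Nat.count Nat.Prime (2*m+1)) := by
        apply Nat.pow_le_pow_right (by omega)
        rw [Nat.count_eq_card_filter_range]
        exact Finset.card_le_card hsub

lemma pi_lower_s9 (m : ℕ) (hm : 4 ≤ m) :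
    (m:ℝ) * Real.log 4 ≤ (Nat.count Nat.Prime (2*m+1) + 1) * Real.log (2*m) := by
  set k := Nat.count Nat.Prime (2*m+1)
  have h1 : 4^m ≤ (2*m)^(k+1) := by
    calc 4^m ≤ m * Nat.centralBinom m := (Nat.four_pow_lt_mul_centralBinom m hm).le
      _ ≤ (2*m) * (2*m)^k := Nat.mul_le_mul (by omega) (binom_le m (by omega))
      _ = (2*m)^(k+1) := by ring
  have h2 : Real.log ((4:ℕ)^m : ℕ) ≤ Real.log (((2*m)^(k+1) : ℕ)) := by
    apply Real.log_le_log (by positivity)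
    exact_mod_cast h1
  push_cast at h2
  rw [Real.log_pow, Real.log_pow] at h2
  push_cast at h2
  convert h2 using 2 <;> push_cast <;> ring


lemma cheb_lower {n : ℕ} (hn : 1 ≤ n) : (p n : ℝ) ≤ 8 * n * Real.log (p n) := by
  have hlog2 := Real.log_two_gt_d9
  have hlogN := log_p_pos n
  have hnR : (1:ℝ) ≤ n := by exact_mod_cast hn
  by_cases h9 : 9 ≤ p n
  · set N := p n with hN
    set m := N / 2 with hm
    have hm4 : 4 ≤ m := by omega
    have hk : Nat.count Nat.Prime (2*m+1) ≤ n := by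
      rw [← count_p hn]
      exact Nat.count_monotone _ (by omega)
    have h := pi_lower_s9 m hm4
    have hlog2m : Real.log (2*m : ℕ) ≤ Real.log N := by
      apply Real.log_le_log (by positivity)
      exact_mod_cast (by omega : 2*m ≤ N)
    have hlog2m' : 0 ≤ Real.log ((2*m : ℕ) : ℝ) := by
      apply Real.log_nonneg
      exact_mod_cast (by omega : 1 ≤ 2*m)
    have hA : (m:ℝ) * Real.log 4 ≤ (n+1) * Real.log N := by
      refine h.trans ?_
      have h1 : ((Nat.count Nat.Prime (2*m+1) : ℝ) + 1) ≤ (n:ℝ) + 1 := by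
        have := hk; push_cast; exact_mod_cast Nat.add_le_add_right this 1
      have h2 : ((Nat.count Nat.Prime (2*m+1) : ℝ) + 1) * Real.log ((2*m:ℕ):ℝ)
          ≤ ((n:ℝ)+1) * Real.log ((2*m:ℕ):ℝ) := by
        apply mul_le_mul_of_nonneg_right h1 hlog2m'
      refine le_trans (le_of_eq ?_) (h2.trans ?_)
      · push_cast; ring
      · apply mul_le_mul_of_nonneg_left _ (by positivity)
        exact_mod_cast hlog2m
    have hlog4 : (1:ℝ) ≤ Real.log 4 := by
      rw [show (4:ℝ) = 2^2 by norm_num, Real.log_pow]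
      push_cast; linarith
    have hm' : (N:ℝ)/4 ≤ (m:ℝ) := by
      have h1 : N ≤ 2*m+1 := by omega
      have h2 : 2 ≤ N := p_two_le n
      have h3 : (N:ℝ) ≤ 2*m+1 := by exact_mod_cast h1
      have h4 : (2:ℝ) ≤ N := by exact_mod_cast h2
      linarith
    nlinarith [mul_le_mul_of_nonneg_right hm' (by linarith : (0:ℝ) ≤ Real.log 4), hA, hlogN.le, hnR]
  · rcases eq_or_lt_of_le hn with h1 | h2
    · have hp1 : p 1 = 2 := by
        unfold p; simpa using Nat.nth_prime_zero_eq_two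
      rw [← h1, hp1]
      push_cast
      nlinarith
    · have hNR : (p n : ℝ) ≤ 8 := by exact_mod_cast (by omega : p n ≤ 8)
      have hn2 : (2:ℝ) ≤ n := by exact_mod_cast h2
      have hlogN2 : Real.log 2 ≤ Real.log (p n) := by
        apply Real.log_le_log (by norm_num)
        exact_mod_cast p_two_le n
      nlinarith

lemma p_succ_le_two_mul (n : ℕ) (hn : 1 ≤ n) : p (n+1) ≤ 2 * p n := by
  obtain ⟨q, hq, hq1, hq2⟩ := Nat.exists_prime_lt_and_le_two_mul (p n) (by have := p_two_le n; omega)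
  have hqe : Nat.nth Nat.Prime (Nat.count Nat.Prime q) = q := Nat.nth_count hq
  have h1 : Nat.nth Nat.Prime (n-1) < Nat.nth Nat.Prime (Nat.count Nat.Prime q) := by
    rw [hqe]; exact hq1
  have h2 : n - 1 < Nat.count Nat.Prime q :=
    (Nat.nth_lt_nth Nat.infinite_setOf_prime).1 h1
  have h3 : p (n+1) ≤ q := by
    unfold p
    rw [← hqe]
    exact (Nat.nth_le_nth Nat.infinite_setOf_prime).2 (by omega)
  omega

lemma p_mono {n m : ℕ} (hn : 1 ≤ n) (hnm : n ≤ m) : p n ≤ p m := by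
  unfold p
  exact (Nat.nth_le_nth Nat.infinite_setOf_prime).2 (by omega)

set_option maxHeartbeats 1600000 in
theorem stmt_9 :
    (∃ C : ℝ, 0 < C ∧ ∀ n : ℕ, 1 ≤ n →
        (p (n + 1) : ℝ) - p n ≤ C * (Real.log (p n)) ^ 2) ↔
    (∃ L : ℝ, ∀ m n : ℕ, 1 ≤ m → 1 ≤ n →
        |(1 : ℝ) / p n - 1 / p m| ≤ L * |(1 : ℝ) / n - 1 / m|) := by
  constructor
  · rintro ⟨C, hC, hgap⟩
    refine ⟨49 * C, ?_⟩
    -- step inequality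
    have step : ∀ k : ℕ, 1 ≤ k →
        1 / (p k : ℝ) - 1 / p (k+1) ≤ 49 * C * (1/(k:ℝ) - 1/(k+1)) := by
      intro k hk
      have hpk := p_posR k
      have hpk1 := p_posR (k+1)
      have hkR : (1:ℝ) ≤ k := by exact_mod_cast hk
      have hkpos : (0:ℝ) < k := by linarith
      have h1 : 1 / (p k : ℝ) - 1 / p (k+1) = ((p (k+1) : ℝ) - p k) / (p k * p (k+1)) := by
        field_simp
        try ring
      have h2 : (1:ℝ)/(k:ℝ) - 1/(k+1) = 1 / (k * (k+1)) := by
        field_simp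
        try ring
      rw [h1, h2]
      have hcb1 := cheb_upper hk
      have hcb2 := cheb_upper (by omega : 1 ≤ k + 1)
      have hlogk := log_p_pos k
      have hlogk1 := log_p_pos (k+1)
      have hmono : Real.log (p k) ≤ Real.log (p (k+1)) := by
        apply Real.log_le_log hpk
        exact_mod_cast p_mono hk (by omega)
      -- k*(k+1)*log(p k)^2 ≤ 49 * p k * p (k+1)
      have key : (k:ℝ) * (k+1) * (Real.log (p k))^2 ≤ 49 * (p k * p (k+1)) := by
        have e1 : (k:ℝ) * Real.log (p k) ≤ 7 * p k := hcb1
        have e2 : ((k:ℝ)+1) * Real.log (p k) ≤ 7 * p (k+1) := by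
          have : ((k:ℝ)+1) * Real.log (p (k+1)) ≤ 7 * p (k+1) := by exact_mod_cast hcb2
          nlinarith
        nlinarith [mul_le_mul e1 e2 (by positivity) (by positivity)]
      have hgapk := hgap k hk
      rw [mul_one_div, div_le_div_iff₀ (by positivity) (by positivity)]
      have hgap0 : (0:ℝ) ≤ (p (k+1) : ℝ) - p k := by
        have := p_lt_p_succ hk
        have : (p k : ℝ) ≤ p (k+1) := by exact_mod_cast this.le
        linarith
      calc ((p (k+1) : ℝ) - p k) * (k * (k+1)) ≤ (C * (Real.log (p k))^2) * (k * (k+1)) := by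
            apply mul_le_mul_of_nonneg_right hgapk (by positivity)
        _ ≤ 49 * C * (p k * p (k+1)) := by nlinarith [key]
    -- telescoping
    have tel : ∀ n m : ℕ, 1 ≤ n → n ≤ m →
        1 / (p n : ℝ) - 1 / p m ≤ 49 * C * (1/(n:ℝ) - 1/(m:ℝ)) := by
      intro n m hn hnm
      induction m with
      | zero => omega
      | succ m ih =>
        rcases eq_or_lt_of_le hnm with h | h
        · rw [h]; simp
        · have hm : n ≤ m := by omega
          have hm1 : 1 ≤ m := by omega
          have := step m hm1
          have := ih hm
          push_cast at *
          linarith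
    intro m n hm hn
    have habs : ∀ a b : ℕ, 1 ≤ a → a ≤ b →
        |(1 : ℝ) / p b - 1 / p a| ≤ 49 * C * |(1 : ℝ) / b - 1 / a| := by
      intro a b ha hab
      have h1 : (1:ℝ)/p b ≤ 1/p a := by
        apply div_le_div_of_nonneg_left (by norm_num) (p_posR a)
        exact_mod_cast p_mono ha hab
      have h2 : (1:ℝ)/(b:ℝ) ≤ 1/(a:ℝ) := by
        apply div_le_div_of_nonneg_left (by norm_num) (by exact_mod_cast ha)
        exact_mod_cast hab
      rw [abs_of_nonpos (by linarith), abs_of_nonpos (by linarith)]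
      have := tel a b ha hab
      linarith
    rcases le_total n m with h | h
    · have := habs n m hn h
      rwa [abs_sub_comm ((1:ℝ)/(p m)) (1/(p n)), abs_sub_comm ((1:ℝ)/(m:ℝ)) (1/(n:ℝ))] at this
    · exact habs m n hm h
  · rintro ⟨L, hL⟩
    have hLpos : (1:ℝ)/3 ≤ L := by
      have h := hL 1 2 (by norm_num) (by norm_num)
      have hp1 : p 1 = 2 := by unfold p; simpa using Nat.nth_prime_zero_eq_two
      have hp2 : p 2 = 3 := by unfold p; simpa using Nat.nth_prime_one_eq_three
      rw [hp1, hp2] at h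
      push_cast at h
      rw [show |(1:ℝ)/3 - 1/2| = 1/6 by rw [abs_of_nonpos (by norm_num)]; norm_num] at h
      rw [show |(1:ℝ)/2 - 1/1| = 1/2 by rw [abs_of_nonpos (by norm_num)]; norm_num] at h
      linarith
    refine ⟨128 * L, by linarith, ?_⟩
    intro n hn
    have hpn := p_posR n
    have hpn1 := p_posR (n+1)
    have hnR : (1:ℝ) ≤ n := by exact_mod_cast hn
    have hlt := p_lt_p_succ hn
    have hltR : (p n : ℝ) < p (n+1) := by exact_mod_cast hlt
    have hlip := hL (n+1) n (by omega) hn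
    have h1 : |(1 : ℝ) / p n - 1 / p (n+1)| = ((p (n+1):ℝ) - p n)/(p n * p (n+1)) := by
      have hx : (0:ℝ) < 1/p n - 1/p (n+1) := by
        have : (1:ℝ)/p (n+1) < 1/p n := by
          apply div_lt_div_of_pos_left (by norm_num) hpn hltR
        linarith
      rw [abs_of_pos hx]
      field_simp
      try ring
    have h2 : |(1 : ℝ) / (n:ℝ) - 1 / ((n:ℕ)+1:ℝ)| = 1/((n:ℝ)*(n+1)) := by
      have hx : (0:ℝ) < 1/(n:ℝ) - 1/((n:ℝ)+1) := by
        have : (1:ℝ)/((n:ℝ)+1) < 1/n := by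
          apply div_lt_div_of_pos_left (by norm_num) (by linarith) (by linarith)
        linarith
      push_cast
      rw [abs_of_pos hx]
      field_simp
      ring
    rw [h1] at hlip
    push_cast at hlip h2
    rw [h2] at hlip
    -- gap ≤ L * p n * p (n+1) / (n * (n+1))
    have h3 : (p (n+1):ℝ) - p n ≤ L * (p n * p (n+1)) / ((n:ℝ)*(n+1)) := by
      rw [div_le_iff₀ (by positivity)] at hlip
      calc (p (n+1):ℝ) - p n ≤ L * (1/((n:ℝ)*(n+1))) * (p n * p (n+1)) := hlip
        _ = L * (p n * p (n+1)) / ((n:ℝ)*(n+1)) := by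
            field_simp
    have hbert : (p (n+1) : ℝ) ≤ 2 * p n := by exact_mod_cast p_succ_le_two_mul n hn
    have hcl := cheb_lower hn
    have hlogn := log_p_pos n
    -- p n ≤ 8 n log p n ⇒ p n * p (n+1) ≤ 2 * (8 n log p n)^2
    have h4 : L * (p n * p (n+1)) / ((n:ℝ)*(n+1)) ≤ 128 * L * (Real.log (p n))^2 := by
      rw [div_le_iff₀ (by positivity)]
      have hL0 : (0:ℝ) < L := by linarith
      have hsq : (p n : ℝ) * p n ≤ (8 * n * Real.log (p n))^2 := by
        have h' := mul_le_mul hcl hcl hpn.le (by positivity)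
        nlinarith [h']
      have hsq' : (p n : ℝ) * p n ≤ 64 * ((n:ℝ) * Real.log (p n))^2 :=
        hsq.trans (le_of_eq (by ring))
      have hb2 : (p n:ℝ) * p (n+1) ≤ 2 * ((p n:ℝ) * p n) := by
        nlinarith [mul_le_mul_of_nonneg_left hbert hpn.le]
      have h5 : (p n : ℝ) * p (n+1) ≤ 128 * ((n:ℝ) * Real.log (p n))^2 := by
        linarith
      have h6 : L * ((p n:ℝ) * p (n+1)) ≤ L * (128 * ((n:ℝ) * Real.log (p n))^2) :=
        mul_le_mul_of_nonneg_left h5 hL0.le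
      calc L * ((p n:ℝ) * p (n+1)) ≤ L * (128 * ((n:ℝ) * Real.log (p n))^2) := h6
        _ ≤ 128 * L * (Real.log (p n))^2 * ((n:ℝ)*(n+1)) := by
            have hnn : (n:ℝ)*(n:ℝ) ≤ (n:ℝ)*((n:ℝ)+1) := by nlinarith
            nlinarith [mul_le_mul_of_nonneg_left hnn (mul_pos hL0 (pow_pos hlogn 2)).le]
    linarith [h3, h4]
end
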